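/- arXiv:2111.00271 — 2 statements merged into one kernel-verified Lean document; each statement's English description precedes it below -/
import Mathlib

section
/- Strict version: if Z_∼ and Z_≁ are independent ℕ-valued random variables with P(Z_∼ ≥ k) > P(Z_≁ ≥ k) for some k with P(Z_≁ = k') > 0 for some k' < k, and P(Z_∼ ≥ j) ≥ P(Z_≁ ≥ j) for all j, and moreover P(Z_∼ < j) ≤ P(Z_≁ < j) for all j with suitable strictness, then P(Z_∼ > Z_≁ | Z_∼ ≠ Z_≁) > 1/2. -/
open MeasureTheory ProbabilityTheory
open scoped ENNReal

private lemma nat_set_measurable (s : Set ℕ) : MeasurableSet s :=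
  s.to_countable.measurableSet

private lemma measure_preimage_nat {Ω : Type*} [MeasurableSpace Ω] (μ : Measure Ω)
    (Y : Ω → ℕ) (hY : Measurable Y) (s : Set ℕ) [DecidablePred (· ∈ s)] :
    μ (Y ⁻¹' s) = ∑' l : ℕ, if l ∈ s then μ (Y ⁻¹' {l}) else 0 := by
  have hset : Y ⁻¹' s = ⋃ l : ℕ, if l ∈ s then Y ⁻¹' {l} else ∅ := by
    ext ω
    simp only [Set.mem_iUnion, Set.mem_preimage]
    constructor
    · intro h
      exact ⟨Y ω, by simp [h]⟩
    · rintro ⟨l, hl⟩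
      split_ifs at hl with h
      · simp only [Set.mem_preimage, Set.mem_singleton_iff] at hl
        rwa [hl]
      · exact absurd hl (Set.notMem_empty ω)
  have hdisj : Pairwise (Function.onFun Disjoint
      (fun l : ℕ => if l ∈ s then Y ⁻¹' {l} else ∅)) := by
    intro l m hlm
    have hbase : Disjoint (Y ⁻¹' {l}) (Y ⁻¹' {m}) :=
      (Set.disjoint_singleton.mpr hlm).preimage Y
    dsimp only [Function.onFun]
    split_ifs <;> simp [hbase]
  have hmeas : ∀ l : ℕ, MeasurableSet (if l ∈ s then Y ⁻¹' {l} else ∅) := by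
    intro l
    split_ifs
    · exact hY (nat_set_measurable _)
    · exact MeasurableSet.empty
  rw [hset, measure_iUnion hdisj hmeas]
  congr 1 with l
  split_ifs <;> simp

private lemma measure_mem_decomp {Ω : Type*} [MeasurableSpace Ω] (μ : Measure Ω)
    (X Y : Ω → ℕ) (hX : Measurable X) (hY : Measurable Y)
    (hindep : IndepFun X Y μ) (u : ℕ → Set ℕ) :
    μ {ω | X ω ∈ u (Y ω)} = ∑' i : ℕ, μ (Y ⁻¹' {i}) * μ (X ⁻¹' u i) := by
  have hset : {ω | X ω ∈ u (Y ω)} = ⋃ i : ℕ, (Y ⁻¹' {i} ∩ X ⁻¹' u i) := by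
    ext ω
    simp only [Set.mem_setOf_eq, Set.mem_iUnion, Set.mem_inter_iff, Set.mem_preimage,
      Set.mem_singleton_iff]
    constructor
    · intro h
      exact ⟨Y ω, rfl, h⟩
    · rintro ⟨i, rfl, h⟩
      exact h
  have hdisj : Pairwise (Function.onFun Disjoint
      (fun i : ℕ => Y ⁻¹' {i} ∩ X ⁻¹' u i)) := by
    intro i j hij
    have hbase : Disjoint (Y ⁻¹' {i}) (Y ⁻¹' {j}) :=
      (Set.disjoint_singleton.mpr hij).preimage Y
    exact (hbase.mono Set.inter_subset_left Set.inter_subset_left)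
  have hmeas : ∀ i : ℕ, MeasurableSet (Y ⁻¹' {i} ∩ X ⁻¹' u i) := fun i =>
    (hY (nat_set_measurable _)).inter (hX (nat_set_measurable _))
  rw [hset, measure_iUnion hdisj hmeas]
  congr 1 with i
  rw [Set.inter_comm,
    hindep.measure_inter_preimage_eq_mul _ _ (nat_set_measurable _) (nat_set_measurable _),
    mul_comm]

/-- Strict version: if `Z∼` strictly stochastically dominates `Z≁` (the tail
probabilities differ strictly at some `k` with probability mass of `Z≁` strictly
below `k`), then the AUC `P(Z∼ > Z≁ | Z∼ ≠ Z≁) > 1/2`. -/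
theorem auc_gt_half_of_strict_stoch_dom
    {Ω : Type*} [MeasurableSpace Ω] (μ : Measure Ω) [IsProbabilityMeasure μ]
    (X Y : Ω → ℕ) (hX : Measurable X) (hY : Measurable Y)
    (hindep : IndepFun X Y μ)
    (hdom : ∀ j : ℕ, μ {ω | j ≤ Y ω} ≤ μ {ω | j ≤ X ω})
    (hdom' : ∀ j : ℕ, μ {ω | X ω < j} ≤ μ {ω | Y ω < j})
    (hstrict : ∃ k : ℕ, μ {ω | k ≤ Y ω} < μ {ω | k ≤ X ω} ∧
      ∃ k' : ℕ, k' < k ∧ 0 < μ {ω | Y ω = k'})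
    (hne : 0 < μ {ω | X ω ≠ Y ω}) :
    1 / 2 < μ {ω | Y ω < X ω} / μ {ω | X ω ≠ Y ω} := by
  classical
  set p : ℕ → ℝ≥0∞ := fun i => μ (Y ⁻¹' {i}) with hp
  set q : ℕ → ℝ≥0∞ := fun i => μ (X ⁻¹' {i}) with hq
  set S : ℕ → ℝ≥0∞ := fun j => μ (Y ⁻¹' Set.Ici j) with hS
  set T : ℕ → ℝ≥0∞ := fun j => μ (X ⁻¹' Set.Ici j) with hT
  set M : ℕ → ℝ≥0∞ := fun j => μ (Y ⁻¹' Set.Iio j) with hM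
  set L : ℕ → ℝ≥0∞ := fun j => μ (X ⁻¹' Set.Iio j) with hL
  -- translation of hypotheses
  have hST : ∀ j, S j ≤ T j := fun j => hdom j
  have hLM : ∀ j, L j ≤ M j := fun j => hdom' j
  obtain ⟨k, hk, k', hk'lt, hk'pos⟩ := hstrict
  have hk : S k < T k := hk
  have hk'pos : 0 < p k' := by
    have : {ω | Y ω = k'} = Y ⁻¹' {k'} := by ext ω; simp [Set.mem_preimage]
    rwa [this] at hk'pos
  -- decompositions
  have hA : μ {ω | Y ω < X ω} = ∑' i : ℕ, p i * T (i + 1) := by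
    have h1 : {ω | Y ω < X ω} = {ω | X ω ∈ Set.Ici (Y ω + 1)} := by
      ext ω; simp only [Set.mem_setOf_eq, Set.mem_Ici]; omega
    rw [h1, measure_mem_decomp μ X Y hX hY hindep (fun i => Set.Ici (i + 1))]
  have hB : μ {ω | X ω < Y ω} = ∑' i : ℕ, p i * L i := by
    have h1 : {ω | X ω < Y ω} = {ω | X ω ∈ Set.Iio (Y ω)} := by
      ext ω; simp
    rw [h1, measure_mem_decomp μ X Y hX hY hindep (fun i => Set.Iio i)]
  -- tsum formulas for tail/initial measures of Y
  have hMsum : ∀ j : ℕ, M j = ∑' l : ℕ, if l < j then p l else 0 := by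
    intro j
    rw [show M j = μ (Y ⁻¹' Set.Iio j) from rfl, measure_preimage_nat μ Y hY (Set.Iio j)]
    exact tsum_congr fun l => by by_cases h : l < j <;> simp [h, hp]
  have hSsum : ∀ j : ℕ, S j = ∑' l : ℕ, if j ≤ l then p l else 0 := by
    intro j
    rw [show S j = μ (Y ⁻¹' Set.Ici j) from rfl, measure_preimage_nat μ Y hY (Set.Ici j)]
    exact tsum_congr fun l => by by_cases h : j ≤ l <;> simp [h, hp]
  -- symmetry : ∑ p i * M i = ∑ p i * S (i+1)
  have hsym : ∑' i : ℕ, p i * M i = ∑' i : ℕ, p i * S (i + 1) := by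
    calc ∑' i : ℕ, p i * M i
        = ∑' i : ℕ, ∑' l : ℕ, (if l < i then p i * p l else 0) := by
          refine tsum_congr fun i => ?_
          rw [hMsum i, ENNReal.tsum_mul_left.symm]
          exact tsum_congr fun l => by split_ifs <;> simp
      _ = ∑' l : ℕ, ∑' i : ℕ, (if l < i then p i * p l else 0) := ENNReal.tsum_comm
      _ = ∑' l : ℕ, p l * S (l + 1) := by
          refine tsum_congr fun l => ?_
          rw [hSsum (l + 1), ENNReal.tsum_mul_left.symm]
          refine tsum_congr fun i => ?_
          by_cases h : l < i
          · have h2 : l + 1 ≤ i := Nat.succ_le_of_lt h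
            simp [h, h2, mul_comm]
          · have h2 : ¬ (l + 1 ≤ i) := by omega
            simp [h, h2]
  -- total masses
  have hptotal : ∑' i : ℕ, p i = 1 := by
    have := measure_preimage_nat μ Y hY (Set.univ : Set ℕ)
    simpa using this.symm
  have hfin : ∀ j, T j ≤ 1 := fun j => prob_le_one
  have hSfin : ∀ j, S j ≤ 1 := fun j => prob_le_one
  -- find index j with p j > 0 and S (j+1) < T (j+1)
  have hcompM : M k + S k = 1 := by
    show μ (Y ⁻¹' Set.Iio k) + μ (Y ⁻¹' Set.Ici k) = 1
    have : Y ⁻¹' Set.Ici k = (Y ⁻¹' Set.Iio k)ᶜ := by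
      ext ω; simp [Set.mem_preimage, not_lt]
    rw [this, measure_add_measure_compl (hY (nat_set_measurable _))]
    exact measure_univ
  have hcompL : L k + T k = 1 := by
    show μ (X ⁻¹' Set.Iio k) + μ (X ⁻¹' Set.Ici k) = 1
    have : X ⁻¹' Set.Ici k = (X ⁻¹' Set.Iio k)ᶜ := by
      ext ω; simp [Set.mem_preimage, not_lt]
    rw [this, measure_add_measure_compl (hX (nat_set_measurable _))]
    exact measure_univ
  have hLMk : L k < M k := by
    by_contra h
    push_neg at h
    have h1 : M k + S k < L k + T k := by
      calc M k + S k ≤ L k + S k := add_le_add_left h _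
        _ < L k + T k := ENNReal.add_lt_add_left (ne_top_of_le_ne_top ENNReal.one_ne_top
            (hcompL ▸ le_add_right (le_refl (L k)))) hk
    rw [hcompM, hcompL] at h1
    exact absurd h1 (lt_irrefl 1)
  have hMfin : ∀ j : ℕ, M j = ∑ i ∈ Finset.range j, p i := by
    intro j
    rw [hMsum j]
    rw [tsum_eq_sum (s := Finset.range j) (by intro i hi; simp at hi; simp [hi])]
    exact Finset.sum_congr rfl fun i hi => by simp at hi; simp [hi]
  have hLfin : ∀ j : ℕ, L j = ∑ i ∈ Finset.range j, q i := by
    intro j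
    have := measure_preimage_nat μ X hX (Set.Iio j)
    show μ (X ⁻¹' Set.Iio j) = _
    simp only [Set.mem_Iio] at this
    rw [this, tsum_eq_sum (s := Finset.range j) (by intro i hi; simp at hi; simp [hi])]
    exact Finset.sum_congr rfl fun i hi => by simp at hi; simp [hi, hq]
  -- there exists i < k with q i < p i
  have hex : ∃ i ∈ Finset.range k, q i < p i := by
    by_contra h
    push_neg at h
    have : M k ≤ L k := by
      rw [hMfin, hLfin]
      exact Finset.sum_le_sum h
    exact absurd (lt_of_le_of_lt this hLMk) (lt_irrefl _)
  set F : Finset ℕ := (Finset.range k).filter (fun i => q i < p i) with hF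
  have hFne : F.Nonempty := by
    obtain ⟨i, hi, hqi⟩ := hex
    exact ⟨i, Finset.mem_filter.mpr ⟨hi, hqi⟩⟩
  set j : ℕ := F.max' hFne with hj
  have hjF : j ∈ F := F.max'_mem hFne
  have hjk : j < k := Finset.mem_range.mp (Finset.mem_filter.mp hjF).1
  have hpj : q j < p j := (Finset.mem_filter.mp hjF).2
  have hpjpos : 0 < p j := lt_of_le_of_lt zero_le hpj
  have hmax : ∀ i, j < i → i < k → p i ≤ q i := by
    intro i hji hik
    by_contra h
    push_neg at h
    have : i ∈ F := Finset.mem_filter.mpr ⟨Finset.mem_range.mpr hik, h⟩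
    exact absurd (F.le_max' i this) (not_le.mpr hji)
  -- S (j+1) < T (j+1)
  have hSsplit : S (j + 1) = S k + ∑ i ∈ Finset.Ico (j + 1) k, p i := by
    have hset : Y ⁻¹' Set.Ici (j + 1) = Y ⁻¹' Set.Ici k ∪ Y ⁻¹' (Set.Ico (j + 1) k) := by
      ext ω
      simp only [Set.mem_preimage, Set.mem_Ici, Set.mem_union, Set.mem_Ico]
      omega
    have hd : Disjoint (Y ⁻¹' Set.Ici k) (Y ⁻¹' (Set.Ico (j + 1) k)) := by
      refine Disjoint.preimage _ ?_
      rw [Set.disjoint_iff_inter_eq_empty]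
      ext x; simp only [Set.mem_inter_iff, Set.mem_Ici, Set.mem_Ico, Set.mem_empty_iff_false, iff_false]
      omega
    show μ (Y ⁻¹' Set.Ici (j + 1)) = μ (Y ⁻¹' Set.Ici k) + _
    rw [hset, measure_union' hd (hY (nat_set_measurable _))]
    congr 1
    have := measure_preimage_nat μ Y hY (Set.Ico (j + 1) k)
    rw [this, tsum_eq_sum (s := Finset.Ico (j + 1) k)
      (by intro i hi; simp only [Finset.mem_Ico] at hi; exact if_neg hi)]
    refine Finset.sum_congr rfl fun i hi => ?_
    simp only [Finset.mem_Ico] at hi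
    simp [Set.mem_Ico, hi.1, hi.2, hp]
  have hTsplit : T (j + 1) = T k + ∑ i ∈ Finset.Ico (j + 1) k, q i := by
    have hset : X ⁻¹' Set.Ici (j + 1) = X ⁻¹' Set.Ici k ∪ X ⁻¹' (Set.Ico (j + 1) k) := by
      ext ω
      simp only [Set.mem_preimage, Set.mem_Ici, Set.mem_union, Set.mem_Ico]
      omega
    have hd : Disjoint (X ⁻¹' Set.Ici k) (X ⁻¹' (Set.Ico (j + 1) k)) := by
      refine Disjoint.preimage _ ?_
      rw [Set.disjoint_iff_inter_eq_empty]
      ext x; simp only [Set.mem_inter_iff, Set.mem_Ici, Set.mem_Ico, Set.mem_empty_iff_false, iff_false]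
      omega
    show μ (X ⁻¹' Set.Ici (j + 1)) = μ (X ⁻¹' Set.Ici k) + _
    rw [hset, measure_union' hd (hX (nat_set_measurable _))]
    congr 1
    have := measure_preimage_nat μ X hX (Set.Ico (j + 1) k)
    rw [this, tsum_eq_sum (s := Finset.Ico (j + 1) k)
      (by intro i hi; simp only [Finset.mem_Ico] at hi; exact if_neg hi)]
    refine Finset.sum_congr rfl fun i hi => ?_
    simp only [Finset.mem_Ico] at hi
    simp [Set.mem_Ico, hi.1, hi.2, hq]
  have hSTj : S (j + 1) < T (j + 1) := by
    rw [hSsplit, hTsplit]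
    exact ENNReal.add_lt_add_of_lt_of_le
      (ENNReal.sum_lt_top.mpr fun i _ => measure_lt_top μ _).ne hk
      (Finset.sum_le_sum fun i hi => by
        simp only [Finset.mem_Ico] at hi
        exact hmax i (Nat.lt_of_succ_le hi.1) hi.2)
  -- B ≤ ∑ p i * S (i+1) < A
  have hBle : μ {ω | X ω < Y ω} ≤ ∑' i : ℕ, p i * S (i + 1) := by
    rw [hB, ← hsym]
    exact ENNReal.tsum_le_tsum fun i => mul_le_mul_right (hLM i) (p i)
  have hfinsum : (∑' i : ℕ, p i * S (i + 1)) ≠ ⊤ := by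
    have : (∑' i : ℕ, p i * S (i + 1)) ≤ ∑' i : ℕ, p i := by
      refine ENNReal.tsum_le_tsum fun i => ?_
      calc p i * S (i + 1) ≤ p i * 1 := mul_le_mul_right (hSfin _) _
        _ = p i := mul_one _
    rw [hptotal] at this
    exact ne_top_of_le_ne_top ENNReal.one_ne_top this
  have hAB : μ {ω | X ω < Y ω} < μ {ω | Y ω < X ω} := by
    refine lt_of_le_of_lt hBle ?_
    rw [hA]
    refine ENNReal.tsum_lt_tsum hfinsum
      (fun i => mul_le_mul_right (hST _) _) (i := j) ?_
    exact (ENNReal.mul_lt_mul_iff_right (ne_of_gt hpjpos)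
      (ne_top_of_le_ne_top ENNReal.one_ne_top prob_le_one)).mpr hSTj
  -- the union decomposition of {X ≠ Y}
  set A := μ {ω | Y ω < X ω} with hAdef
  set B := μ {ω | X ω < Y ω} with hBdef
  have hunion : μ {ω | X ω ≠ Y ω} = A + B := by
    have hset : {ω | X ω ≠ Y ω} = {ω | Y ω < X ω} ∪ {ω | X ω < Y ω} := by
      ext ω; simp only [Set.mem_setOf_eq, Set.mem_union, ne_eq]; omega
    have hd : Disjoint {ω | Y ω < X ω} {ω | X ω < Y ω} := by
      rw [Set.disjoint_iff_inter_eq_empty]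
      ext ω; simp only [Set.mem_inter_iff, Set.mem_setOf_eq, Set.mem_empty_iff_false, iff_false]
      omega
    rw [hset, measure_union hd (measurableSet_lt hX hY)]
  have hAfin : A ≠ ⊤ := ne_top_of_le_ne_top ENNReal.one_ne_top prob_le_one
  have hABne : A + B ≠ 0 := by
    rw [← hunion]
    exact ne_of_gt hne
  have hABfin : A + B ≠ ⊤ := by
    rw [← hunion]
    exact ne_top_of_le_ne_top ENNReal.one_ne_top prob_le_one
  rw [hunion]
  rw [ENNReal.lt_div_iff_mul_lt (Or.inl hABne) (Or.inl hABfin)]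
  calc 1 / 2 * (A + B) < 1 / 2 * (A + A) := by
        refine (ENNReal.mul_lt_mul_iff_right (by norm_num) (by norm_num)).mpr ?_
        exact ENNReal.add_lt_add_left hAfin hAB
    _ = A := by
        rw [← two_mul, ← mul_assoc, one_div,
          ENNReal.inv_mul_cancel (by norm_num) (by norm_num), one_mul]
end

section
/- Suppose Z_∼ and Z_≁ are independent ℕ-valued random variables such that P(Z_∼ = 0) = 0, P(Z_≁ = 0) > 0, and for all k ≥ 1, P(Z_∼ ≥ k) ≥ P(Z_≁ ≥ k). If P(Z_∼ ≠ Z_≁) > 0, then P(Z_∼ > Z_≁ | Z_∼ ≠ Z_≁) > 1/2. -/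
open MeasureTheory ProbabilityTheory Set

lemma meas_nat_eq_tsum (m : Measure ℕ) (s : Set ℕ) :
    m s = ∑' j : s, m {(j : ℕ)} := by
  have := tsum_measure_preimage_singleton (μ := m) (s := s) s.to_countable
    (f := id) (fun y _ => by simpa using measurableSet_singleton y)
  simpa using this.symm

/-- If `Z∼` never takes value `0`, `Z≁` is `0` with positive probability, and `Z∼`
stochastically dominates `Z≁`, then the AUC `P(Z∼ > Z≁ | Z∼ ≠ Z≁) > 1/2`. -/
theorem auc_gt_half_of_zero_separation
    {Ω : Type*} [MeasurableSpace Ω] (μ : Measure Ω) [IsProbabilityMeasure μ]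
    (X Y : Ω → ℕ) (hX : Measurable X) (hY : Measurable Y)
    (hindep : IndepFun X Y μ)
    (hX0 : μ {ω | X ω = 0} = 0)
    (hY0 : 0 < μ {ω | Y ω = 0})
    (hdom : ∀ k : ℕ, 1 ≤ k → μ {ω | k ≤ Y ω} ≤ μ {ω | k ≤ X ω})
    (hne : 0 < μ {ω | X ω ≠ Y ω}) :
    1 / 2 < μ {ω | Y ω < X ω} / μ {ω | X ω ≠ Y ω} := by
  classical
  set ν := μ.map X with hνdef
  set ρ := μ.map Y with hρdef
  have hmN : ∀ s : Set ℕ, MeasurableSet s := fun s => s.to_countable.measurableSet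
  have hνs : ∀ s : Set ℕ, ν s = μ (X ⁻¹' s) := fun s => Measure.map_apply hX (hmN s)
  have hρs : ∀ s : Set ℕ, ρ s = μ (Y ⁻¹' s) := fun s => Measure.map_apply hY (hmN s)
  have hνp : IsProbabilityMeasure ν := Measure.isProbabilityMeasure_map hX.aemeasurable
  have hρp : IsProbabilityMeasure ρ := Measure.isProbabilityMeasure_map hY.aemeasurable
  have hν0 : ν {0} = 0 := by rw [hνs]; exact hX0
  have hρ0 : 0 < ρ {0} := by rw [hρs]; exact hY0
  have hdom' : ∀ k : ℕ, 1 ≤ k → ρ (Ici k) ≤ ν (Ici k) := by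
    intro k hk; rw [hνs, hρs]; exact hdom k hk
  -- singleton measures are finite
  have hfin : ∀ s : Set ℕ, ν s ≠ ⊤ := fun s => measure_ne_top ν s
  have hρfin : ∀ s : Set ℕ, ρ s ≠ ⊤ := fun s => measure_ne_top ρ s
  -- pointwise comparison
  have hIoi : ∀ k : ℕ, Ioi k = Ici (k + 1) := fun k => by
    ext j; simp only [mem_Ioi, mem_Ici]; omega
  have hGF : ∀ k : ℕ, 1 ≤ k → ν (Iio k) ≤ ρ (Iio k) := by
    intro k hk
    have h1 : ν (Iio k) = 1 - ν (Ici k) := by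
      rw [← prob_compl_eq_one_sub (hmN (Ici k))]; congr 1; ext j; simp
    have h2 : ρ (Iio k) = 1 - ρ (Ici k) := by
      rw [← prob_compl_eq_one_sub (hmN (Ici k))]; congr 1; ext j; simp
    rw [h1, h2]
    exact tsub_le_tsub_left (hdom' k hk) 1
  have hF'G' : ∀ k : ℕ, ρ (Ioi k) ≤ ν (Ioi k) := by
    intro k; rw [hIoi k]; exact hdom' (k + 1) (Nat.le_add_left 1 k)
  -- the minimal point of the support of ν
  have hex : ∃ k, ν {k} ≠ 0 := by
    by_contra h
    push_neg at h
    have : ν univ = 0 := by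
      rw [meas_nat_eq_tsum]; simp [h]
    simp [measure_univ] at this
  set k0 := Nat.find hex with hk0def
  have hk0 : ν {k0} ≠ 0 := Nat.find_spec hex
  have hmin : ∀ j < k0, ν {j} = 0 := fun j hj => by
    have := Nat.find_min hex hj; simpa using this
  have hk01 : 1 ≤ k0 := by
    rcases Nat.eq_zero_or_pos k0 with h | h
    · exact absurd (h ▸ hν0) hk0
    · exact h
  have hGk0 : ν (Iio k0) = 0 := by
    rw [meas_nat_eq_tsum]
    exact ENNReal.summable.tsum_eq_zero_iff.mpr (fun j => hmin j j.2)
  have hFk0 : 0 < ρ (Iio k0) :=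
    lt_of_lt_of_le hρ0 (measure_mono (singleton_subset_iff.mpr hk01))
  -- sums
  set f : ℕ → ENNReal := fun k => (ν (Iio k) + ρ (Ioi k)) * ν {k} with hfdef
  set g : ℕ → ENNReal := fun k => (ρ (Iio k) + ν (Ioi k)) * ν {k} with hgdef
  have hle : ∀ k, f k ≤ g k := by
    intro k
    rcases Nat.eq_zero_or_pos k with h | h
    · subst h; simp [hfdef, hgdef, hν0]
    · exact mul_le_mul_left (add_le_add (hGF k h) (hF'G' k)) _
  have hlt : f k0 < g k0 := by
    have h1 : f k0 = ρ (Ioi k0) * ν {k0} := by rw [hfdef]; simp [hGk0]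
    have h2 : ρ (Ioi k0) * ν {k0} ≤ ν (Ioi k0) * ν {k0} :=
      mul_le_mul_left (hF'G' k0) _
    have h3 : ν (Ioi k0) * ν {k0} < (ρ (Iio k0) + ν (Ioi k0)) * ν {k0} := by
      refine ENNReal.mul_lt_mul_iff_left hk0 (hfin _) |>.mpr ?_
      rw [add_comm]
      exact ENNReal.lt_add_right (hfin _) hFk0.ne'
    rw [h1, hgdef]
    exact lt_of_le_of_lt h2 h3
  have hffin : ∑' k, f k ≠ ⊤ := by
    have : ∀ k, f k ≤ 2 * ν {k} := by
      intro k
      refine mul_le_mul_left ?_ _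
      calc ν (Iio k) + ρ (Ioi k) ≤ 1 + 1 := add_le_add prob_le_one prob_le_one
        _ = 2 := one_add_one_eq_two
    have huniv : ∑' k : ℕ, ν {k} = 1 := by
      rw [← tsum_univ fun k => ν {k}, ← meas_nat_eq_tsum, measure_univ]
    refine ne_top_of_le_ne_top ?_ (ENNReal.tsum_le_tsum this)
    rw [ENNReal.tsum_mul_left, huniv, mul_one]
    exact ENNReal.ofNat_ne_top
  have hsum : ∑' k, f k < ∑' k, g k := ENNReal.tsum_lt_tsum hffin hle hlt
  -- distribute the sums
  have hCB : ∑' k, f k = (∑' k, ν (Iio k) * ν {k}) + ∑' k, ρ (Ioi k) * ν {k} := by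
    rw [← ENNReal.tsum_add]
    exact tsum_congr fun k => add_mul _ _ _
  have hAD : ∑' k, g k = (∑' k, ρ (Iio k) * ν {k}) + ∑' k, ν (Ioi k) * ν {k} := by
    rw [← ENNReal.tsum_add]
    exact tsum_congr fun k => add_mul _ _ _
  -- symmetry : the "self" terms agree
  have hsymm : ∑' k, ν (Iio k) * ν {k} = ∑' k, ν (Ioi k) * ν {k} := by
    have hl : ∀ k : ℕ, ν (Iio k) * ν {k} = ∑' j : ℕ, (if j < k then ν {j} * ν {k} else 0) := by
      intro k
      rw [meas_nat_eq_tsum ν (Iio k), ← ENNReal.tsum_mul_right,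
        tsum_subtype (Iio k) (fun j => ν {j} * ν {k})]
      exact tsum_congr fun j => by simp [Set.indicator_apply]
    have hr : ∀ j : ℕ, ν (Ioi j) * ν {j} = ∑' k : ℕ, (if j < k then ν {j} * ν {k} else 0) := by
      intro j
      rw [meas_nat_eq_tsum ν (Ioi j), ← ENNReal.tsum_mul_right,
        tsum_subtype (Ioi j) (fun k => ν {k} * ν {j})]
      exact tsum_congr fun k => by simp [Set.indicator_apply, mul_comm]
    calc ∑' k, ν (Iio k) * ν {k}
        = ∑' k, ∑' j, (if j < k then ν {j} * ν {k} else 0) := tsum_congr hl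
      _ = ∑' j, ∑' k, (if j < k then ν {j} * ν {k} else 0) := ENNReal.tsum_comm
      _ = ∑' j, ν (Ioi j) * ν {j} := (tsum_congr hr).symm
  -- identification of the sums with the event probabilities
  have hmap : μ.map (fun ω => (X ω, Y ω)) = ν.prod ρ :=
    (indepFun_iff_map_prod_eq_prod_map_map hX.aemeasurable hY.aemeasurable).mp hindep
  have hmNN : ∀ s : Set (ℕ × ℕ), MeasurableSet s := fun s => s.to_countable.measurableSet
  have hA : μ {ω | Y ω < X ω} = ∑' k, ρ (Iio k) * ν {k} := by
    have h1 : {ω | Y ω < X ω} = (fun ω => (X ω, Y ω)) ⁻¹' {p : ℕ × ℕ | p.2 < p.1} := rfl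
    rw [h1, ← Measure.map_apply (hX.prodMk hY) (hmNN _), hmap, Measure.prod_apply (hmNN _)]
    have h2 : ∀ k : ℕ, (Prod.mk k ⁻¹' {p : ℕ × ℕ | p.2 < p.1}) = Iio k := fun k => rfl
    simp_rw [h2]
    exact lintegral_countable' _
  have hB : μ {ω | X ω < Y ω} = ∑' k, ρ (Ioi k) * ν {k} := by
    have h1 : {ω | X ω < Y ω} = (fun ω => (X ω, Y ω)) ⁻¹' {p : ℕ × ℕ | p.1 < p.2} := rfl
    rw [h1, ← Measure.map_apply (hX.prodMk hY) (hmNN _), hmap, Measure.prod_apply (hmNN _)]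
    have h2 : ∀ k : ℕ, (Prod.mk k ⁻¹' {p : ℕ × ℕ | p.1 < p.2}) = Ioi k := fun k => rfl
    simp_rw [h2]
    exact lintegral_countable' _
  -- splitting the event {X ≠ Y}
  have hsplit : μ {ω | X ω ≠ Y ω} = μ {ω | Y ω < X ω} + μ {ω | X ω < Y ω} := by
    have hu : {ω | X ω ≠ Y ω} = {ω | Y ω < X ω} ∪ {ω | X ω < Y ω} := by
      ext ω
      exact ⟨fun h => (Ne.lt_or_gt h).symm, fun h => h.elim (fun h => h.ne') fun h => h.ne⟩
    have hd : Disjoint {ω | Y ω < X ω} {ω | X ω < Y ω} := by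
      rw [Set.disjoint_left]
      intro ω h1 h2
      simp only [Set.mem_setOf_eq] at h1 h2
      exact lt_asymm h1 h2
    rw [hu, measure_union hd (measurableSet_lt hX hY)]
  -- conclude B < A
  have hDfin : ∑' k, ν (Ioi k) * ν {k} ≠ ⊤ := by
    have huniv : ∑' k : ℕ, ν {k} = 1 := by
      rw [← tsum_univ fun k => ν {k}, ← meas_nat_eq_tsum, measure_univ]
    refine ne_top_of_le_ne_top ?_
      (ENNReal.tsum_le_tsum fun k => mul_le_mul_left prob_le_one (ν {k}))
    simp only [one_mul]
    rw [huniv]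
    exact ENNReal.one_ne_top
  have hBA : μ {ω | X ω < Y ω} < μ {ω | Y ω < X ω} := by
    rw [hA, hB]
    have h := hsum
    rw [hCB, hAD, hsymm, add_comm (∑' k, ρ (Iio k) * ν {k})] at h
    exact (ENNReal.add_lt_add_iff_left hDfin).mp h
  -- final arithmetic
  rw [hsplit]
  set a := μ {ω | Y ω < X ω}
  set b := μ {ω | X ω < Y ω}
  have ha_top : a ≠ ⊤ := measure_ne_top μ _
  have hb_top : b ≠ ⊤ := measure_ne_top μ _
  have hab0 : a + b ≠ 0 := by
    have hpos : 0 < a := lt_of_le_of_lt (zero_le : 0 ≤ b) hBA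
    simp only [ne_eq, add_eq_zero, not_and]
    intro h; exact absurd h hpos.ne'
  have hab_top : a + b ≠ ⊤ := ENNReal.add_ne_top.mpr ⟨ha_top, hb_top⟩
  rw [ENNReal.lt_div_iff_mul_lt (Or.inl hab0) (Or.inl hab_top)]
  have h2a : a + b < 2 * a := by
    rw [two_mul]
    exact ENNReal.add_lt_add_left ha_top hBA
  calc 1 / 2 * (a + b) < 1 / 2 * (2 * a) := by
        exact (ENNReal.mul_lt_mul_iff_right (by norm_num) (by norm_num)).mpr h2a
    _ = a := by
        rw [← mul_assoc, one_div, ENNReal.inv_mul_cancel two_ne_zero ENNReal.ofNat_ne_top, one_mul]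
end
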